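/- Define recursively on [0,1]: T_1(x) = 2x, S_1(x) = 2^r(x − 1/2 + 2^{-r-1})_+ − 2^r(x − 1/2 − 2^{-r-1})_+, T_{j+1}(x) = (2T_j(x) − 2S_j(x))_+, S_{j+1}(x) = S_1(T_j(x) − S_j(x)). Let A_{j,r} = {x ∈ [0,1] : |[0.a_{j+1}^x a_{j+2}^x ...]_2 − 1/2| ≥ 2^{-r-1}}. Then for every x ∈ ∩_{j=1}^K A_{j,r} ∩ A_{0,r} and every 1 ≤ j ≤ K, S_j(x) = a_j^x, the j-th binary digit of x. -/
import Mathlib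


noncomputable section

/-- `S_1(x) = 2^r(x − 1/2 + 2^{-r-1})₊ − 2^r(x − 1/2 − 2^{-r-1})₊`. -/
def S1 (r : ℕ) (x : ℝ) : ℝ :=
  2 ^ r * max (x - 1/2 + ((2:ℝ) ^ (r + 1))⁻¹) 0 - 2 ^ r * max (x - 1/2 - ((2:ℝ) ^ (r + 1))⁻¹) 0

/-- `STrec r j x = (S_{j+1}(x), T_{j+1}(x))` (so index `j = 0` corresponds to `S_1, T_1`):
`T_1(x) = 2x`, and recursively `T_{j+1}(x) = (2T_j(x) − 2S_j(x))₊`,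
`S_{j+1}(x) = S_1(T_j(x) − S_j(x))`. -/
def STrec (r : ℕ) : ℕ → ℝ → ℝ × ℝ
  | 0, x => (S1 r x, 2 * x)
  | j + 1, x => (S1 r ((STrec r j x).2 - (STrec r j x).1), max (2 * (STrec r j x).2 - 2 * (STrec r j x).1) 0)

/-- With `A_{j,r} = {x ∈ [0,1] : |[0.a_{j+1}^x a_{j+2}^x …]_2 − 1/2| ≥ 2^{-r-1}}`,
for every `x ∈ ⋂_{j=1}^K A_{j,r} ∩ A_{0,r}` and every `1 ≤ j ≤ K`, `S_j(x) = a_j^x`, the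
`j`-th binary digit of `x`.  Here `a x i` denotes the digit `a_{i+1}^x` of a fixed binary
expansion of `x`. -/
theorem stmt16 (r K : ℕ) (hr : 1 ≤ r) (hK : 1 ≤ K) (a : ℝ → ℕ → ℕ) (x : ℝ)
    (hx : x ∈ Set.Icc (0:ℝ) 1) (hdig : ∀ i, a x i ≤ 1)
    (hsum : x = ∑' i : ℕ, (a x i : ℝ) / 2 ^ (i + 1))
    (hA : ∀ j ≤ K, ((2:ℝ) ^ (r + 1))⁻¹ ≤ |(∑' i : ℕ, (a x (j + i) : ℝ) / 2 ^ (i + 1)) - 1/2|) :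
    ∀ j, 1 ≤ j → j ≤ K → (STrec r (j - 1) x).1 = a x (j - 1) := by
  set t : ℕ → ℝ := fun j => ∑' i : ℕ, (a x (j + i) : ℝ) / 2 ^ (i + 1) with ht
  have hsumm : ∀ j, Summable (fun i : ℕ => (a x (j + i) : ℝ) / 2 ^ (i + 1)) := by
    intro j
    apply Summable.of_nonneg_of_le (fun i => by positivity)
      (fun i => ?_) (summable_geometric_two.mul_left (1/2))
    have h1 : (a x (j + i) : ℝ) ≤ 1 := by exact_mod_cast hdig _
    rw [div_le_iff₀ (by positivity)]
    have : (1/2 : ℝ) * (1/2)^i * 2^(i+1) = 1 := by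
      rw [div_pow, one_pow]
      field_simp
      ring
    linarith [this]
  have h0 : ∀ j, 0 ≤ t j := fun j => tsum_nonneg (fun i => by positivity)
  have h1 : ∀ j, t j ≤ 1 := by
    intro j
    have : t j ≤ ∑' i : ℕ, (1:ℝ) / 2 ^ (i + 1) := by
      apply Summable.tsum_le_tsum _ (hsumm j)
      · have he : (fun i : ℕ => (1:ℝ) / 2 ^ (i + 1)) = fun i => 1/2/2^i := by
          funext i; rw [pow_succ]; ring
        rw [he]; exact summable_geometric_two' 1
      · intro i
        apply div_le_div_of_nonneg_right _ (by positivity)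
        exact_mod_cast hdig _
    calc t j ≤ ∑' i : ℕ, (1:ℝ) / 2 ^ (i + 1) := this
    _ = ∑' i : ℕ, (1:ℝ)/2/2^i := by
          apply tsum_congr; intro i; rw [pow_succ]; ring
    _ = 1 := tsum_geometric_two' 1
  have hrec : ∀ j, t j = a x j / 2 + t (j + 1) / 2 := by
    intro j
    rw [ht]
    simp only
    rw [Summable.tsum_eq_zero_add (hsumm j)]
    congr 1
    · norm_num
    · rw [← tsum_div_const]
      apply tsum_congr
      intro i
      have : j + (i + 1) = (j + 1) + i := by omega
      rw [this]
      rw [pow_succ]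
      ring
  have hS : ∀ j ≤ K, S1 r (t j) = a x j := by
    intro j hj
    have hAj := hA j hj
    have habs : ((2:ℝ) ^ (r + 1))⁻¹ ≤ |t j - 1/2| := hAj
    have hinv : (0:ℝ) < ((2:ℝ) ^ (r + 1))⁻¹ := by positivity
    have hb : a x j ≤ 1 := hdig j
    interval_cases h : a x j
    · -- digit 0
      have hle : t j ≤ 1/2 := by
        have := hrec j
        rw [h] at this
        push_cast at this
        have := h1 (j+1)
        linarith [hrec j, h1 (j+1)]
      have hle2 : t j ≤ 1/2 - ((2:ℝ) ^ (r + 1))⁻¹ := by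
        have habs2 : |t j - 1/2| = 1/2 - t j := by rw [abs_of_nonpos (by linarith)]; ring
        rw [habs2] at habs
        linarith
      unfold S1
      rw [max_eq_right (by linarith), max_eq_right (by linarith)]
      norm_num
    · -- digit 1
      have hge : 1/2 ≤ t j := by
        have hr := hrec j
        rw [h] at hr
        push_cast at hr
        linarith [h0 (j+1)]
      have hge2 : 1/2 + ((2:ℝ) ^ (r + 1))⁻¹ ≤ t j := by
        have : |t j - 1/2| = t j - 1/2 := abs_of_nonneg (by linarith)
        rw [this] at habs
        linarith
      unfold S1
      rw [max_eq_left (by linarith), max_eq_left (by linarith)]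
      have h2r : (2:ℝ)^r * ((2:ℝ) ^ (r + 1))⁻¹ = 1/2 := by
        rw [pow_succ]
        field_simp
      push_cast
      nlinarith [h2r]
  have hQ : ∀ j, j + 1 ≤ K → (STrec r j x).1 = a x j ∧ (STrec r j x).2 = 2 * t j := by
    intro j
    induction j with
    | zero =>
      intro _
      have hx0 : x = t 0 := by
        rw [ht]; simpa using hsum
      have h00 := hS 0 (by omega)
      rw [← hx0] at h00
      exact ⟨h00, by rw [← hx0]; rfl⟩
    | succ j ih =>
      intro hjK
      obtain ⟨ih1, ih2⟩ := ih (by omega)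
      have hstep : 2 * t j - (a x j : ℝ) = t (j + 1) := by
        have := hrec j
        linarith
      constructor
      · show S1 r ((STrec r j x).2 - (STrec r j x).1) = _
        rw [ih1, ih2]
        have : 2 * t j - (a x j : ℝ) = t (j+1) := hstep
        rw [this]
        exact hS (j+1) (by omega)
      · show max (2 * (STrec r j x).2 - 2 * (STrec r j x).1) 0 = 2 * t (j+1)
        rw [ih1, ih2]
        have : 2 * (2 * t j) - 2 * (a x j : ℝ) = 2 * t (j+1) := by linarith [hstep]
        rw [this]
        exact max_eq_left (by linarith [h0 (j+1)])
  intro j hj1 hjK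
  have := hQ (j - 1) (by omega)
  exact this.1

end
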